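/- arXiv:0808.0785 — 4 statements merged into one kernel-verified Lean document; each statement's English description precedes it below -/
import Mathlib

section
/- Let K be a field of characteristic zero and t ≥ 1. The ℤ-subalgebra of K[y₁,…,y_t] generated by all elements binom(H − z, n), where H = a₁y₁ + ⋯ + a_t y_t ranges over the ℤ-linear combinations of the variables (a₁,…,a_t ∈ ℤ), z ∈ ℤ and n ∈ ℕ, coincides with the ring Int_ℤ(K[y₁,…,y_t]) of integer-valued polynomials. -/
set_option linter.unusedSectionVars false
set_option linter.unusedVariables false
set_option maxHeartbeats 1600000

/-- The "binomial coefficient" polynomial `binom(p, n) = (1/n!) · ∏_{j=0}^{n-1} (p - j)`. -/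
noncomputable def binomPoly {K : Type*} [Field K] {t : ℕ}
    (p : MvPolynomial (Fin t) K) (n : ℕ) : MvPolynomial (Fin t) K :=
  MvPolynomial.C ((n.factorial : K)⁻¹) *
    ∏ j ∈ Finset.range n, (p - MvPolynomial.C (j : K))

open MvPolynomial Finset


lemma int_prod_eq (w : ℤ) (n : ℕ) :
    ∏ j ∈ Finset.range n, (w - (j : ℤ)) = n.factorial • Ring.choose w n := by
  have h1 : ∏ j ∈ Finset.range n, (w - (j : ℤ)) = (descPochhammer ℤ n).eval w := by
    induction n with
    | zero => simp
    | succ n ih => rw [Finset.prod_range_succ, ih, descPochhammer_succ_eval]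
  rw [h1, Polynomial.eval_eq_smeval, Ring.descPochhammer_eq_factorial_smul_choose]

lemma binom_value {K : Type*} [Field K] [CharZero K] (w : ℤ) (n : ℕ) :
    ((n.factorial : K))⁻¹ * ∏ j ∈ Finset.range n, ((w : K) - (j : K)) =
      ((Ring.choose w n : ℤ) : K) := by
  have h2 : ∏ j ∈ Finset.range n, ((w : K) - (j : K))
      = ((∏ j ∈ Finset.range n, (w - (j : ℤ)) : ℤ) : K) := by
    push_cast; rfl
  rw [h2, int_prod_eq, nsmul_eq_mul]
  push_cast
  rw [← mul_assoc, inv_mul_cancel₀ (by exact_mod_cast Nat.factorial_ne_zero n), one_mul]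

lemma nat_choose_eval {K : Type*} [Field K] [CharZero K] (m n : ℕ) :
    ((n.factorial : K))⁻¹ * ∏ j ∈ Finset.range n, ((m : K) - (j : K)) =
      (m.choose n : K) := by
  have h : ∏ j ∈ Finset.range n, ((m : K) - (j : K)) = (m.descFactorial n : K) := by
    rcases le_or_gt n m with h | h
    · rw [Nat.descFactorial_eq_prod_range]
      push_cast
      refine Finset.prod_congr rfl fun j hj => ?_
      rw [Nat.cast_sub (le_of_lt (lt_of_lt_of_le (Finset.mem_range.mp hj) h))]
    · rw [Finset.prod_eq_zero (Finset.mem_range.mpr h) (by simp),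
        Nat.descFactorial_eq_zero_iff_lt.mpr h, Nat.cast_zero]
  rw [h, Nat.descFactorial_eq_factorial_mul_choose]
  push_cast
  rw [← mul_assoc, inv_mul_cancel₀ (by exact_mod_cast Nat.factorial_ne_zero n), one_mul]

section
variable {K : Type*} [Field K] [CharZero K] {t : ℕ}

lemma mulTop {p q : MvPolynomial (Fin t) K} {a b : Fin t →₀ ℕ}
    (hp : ∀ μ ∈ p.support, μ ≤ a) (hq : ∀ μ ∈ q.support, μ ≤ b) :
    (∀ μ ∈ (p * q).support, μ ≤ a + b) ∧
      coeff (a + b) (p * q) = coeff a p * coeff b q := by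
  constructor
  · intro μ hμ
    obtain ⟨x, hx, y, hy, rfl⟩ := Finset.mem_add.mp (MvPolynomial.support_mul p q hμ)
    exact add_le_add (hp x hx) (hq y hy)
  · rw [MvPolynomial.coeff_mul]
    refine Finset.sum_eq_single_of_mem (a, b) (by simp) ?_
    rintro ⟨x, y⟩ hxy hne
    have hsum : x + y = a + b := by simpa using hxy
    by_cases hx : coeff x p = 0
    · simp [hx]
    by_cases hy : coeff y q = 0
    · simp [hy]
    exfalso
    have hxa : x ≤ a := hp x (MvPolynomial.mem_support_iff.mpr hx)
    have hyb : y ≤ b := hq y (MvPolynomial.mem_support_iff.mpr hy)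
    apply hne
    have hx' : x = a := by
      ext i
      have := congrArg (fun f => f i) hsum
      simp only [Finsupp.add_apply] at this
      have h1 := hxa i
      have h2 := hyb i
      omega
    have hy' : y = b := by
      ext i
      have := congrArg (fun f => f i) hsum
      simp only [Finsupp.add_apply] at this
      have h1 := hxa i
      have h2 := hyb i
      omega
    simp [hx', hy']

lemma q1_top (i : Fin t) (n : ℕ) :
    (∀ μ ∈ (∏ j ∈ Finset.range n, (X i - C (j : K))).support, μ ≤ Finsupp.single i n)
    ∧ coeff (Finsupp.single i n) (∏ j ∈ Finset.range n, (X i - C (j : K))) = 1 := by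
  induction n with
  | zero =>
    constructor
    · intro μ hμ
      rw [Finset.range_zero, Finset.prod_empty] at hμ
      have : coeff μ (1 : MvPolynomial (Fin t) K) ≠ 0 := MvPolynomial.mem_support_iff.mp hμ
      rw [MvPolynomial.coeff_one] at this
      split_ifs at this with h
      · simp [← h, Finsupp.single_zero]
      · exact absurd rfl this
    · simp [MvPolynomial.coeff_one, Finsupp.single_zero]
  | succ n ih =>
    have hlin : ∀ μ ∈ (X i - C ((n : ℕ) : K)).support, μ ≤ Finsupp.single i 1 := by
      intro μ hμ
      have : coeff μ (X i - C ((n : ℕ) : K)) ≠ 0 := MvPolynomial.mem_support_iff.mp hμ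
      rw [MvPolynomial.coeff_sub, MvPolynomial.coeff_X', MvPolynomial.coeff_C] at this
      split_ifs at this with h1 h2 h2
      · exact le_of_eq h1.symm
      · exact le_of_eq h1.symm
      · simp [← h2]
      · simp at this
    have key := mulTop (a := Finsupp.single i n) (b := Finsupp.single i 1) ih.1 hlin
    rw [Finset.prod_range_succ]
    have hsingle : Finsupp.single i n + Finsupp.single i 1 = Finsupp.single i (n + 1) := by
      rw [← Finsupp.single_add]
    constructor
    · intro μ hμ
      have := key.1 μ hμ
      rwa [hsingle] at this
    · rw [← hsingle, key.2, ih.2, one_mul]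
      rw [MvPolynomial.coeff_sub, MvPolynomial.coeff_X', MvPolynomial.coeff_C]
      have h2 : ¬((0 : Fin t →₀ ℕ) = Finsupp.single i 1) := by
        intro h
        have := congrArg (fun f => f i) h
        simp [Finsupp.single_eq_same] at this
      simp [h2]


noncomputable def Qpoly (K : Type*) [Field K] {t : ℕ} (ν : Fin t →₀ ℕ) :
    MvPolynomial (Fin t) K :=
  ∏ i : Fin t, ∏ j ∈ Finset.range (ν i), (X i - C (j : K))

noncomputable def Bpoly (K : Type*) [Field K] {t : ℕ} (ν : Fin t →₀ ℕ) :
    MvPolynomial (Fin t) K :=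
  ∏ i : Fin t, binomPoly (X i) (ν i)

lemma single_sum (ν : Fin t →₀ ℕ) : ∑ i : Fin t, Finsupp.single i (ν i) = ν := by
  ext k
  rw [Finsupp.finset_sum_apply]
  simp only [Finsupp.single_apply]
  simp [Finset.sum_ite_eq]

lemma q_top_aux (ν : Fin t →₀ ℕ) (s : Finset (Fin t)) :
    (∀ μ ∈ (∏ i ∈ s, ∏ j ∈ Finset.range (ν i), (X i - C (j : K))).support,
        μ ≤ ∑ i ∈ s, Finsupp.single i (ν i))
    ∧ coeff (∑ i ∈ s, Finsupp.single i (ν i))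
        (∏ i ∈ s, ∏ j ∈ Finset.range (ν i), (X i - C (j : K))) = 1 := by
  induction s using Finset.induction_on with
  | empty =>
    constructor
    · intro μ hμ
      rw [Finset.prod_empty] at hμ
      have : coeff μ (1 : MvPolynomial (Fin t) K) ≠ 0 := MvPolynomial.mem_support_iff.mp hμ
      rw [MvPolynomial.coeff_one] at this
      split_ifs at this with h
      · simp [← h]
      · exact absurd rfl this
    · simp [MvPolynomial.coeff_one]
  | insert _ _ ha ih =>
    rename_i a s'
    rw [Finset.prod_insert ha, Finset.sum_insert ha]
    have key := mulTop (q1_top a (ν a)).1 ih.1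
    exact ⟨key.1, by rw [key.2, (q1_top a (ν a)).2, ih.2, one_mul]⟩

lemma q_top (ν : Fin t →₀ ℕ) :
    (∀ μ ∈ (Qpoly K ν).support, μ ≤ ν) ∧ coeff ν (Qpoly K ν) = 1 := by
  have := q_top_aux (K := K) ν Finset.univ
  rwa [single_sum] at this

lemma Bpoly_eq (ν : Fin t →₀ ℕ) :
    Bpoly K ν = C (∏ i : Fin t, (((ν i).factorial : K))⁻¹) * Qpoly K ν := by
  rw [Bpoly, Qpoly, map_prod, ← Finset.prod_mul_distrib]
  exact Finset.prod_congr rfl fun i _ => rfl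

lemma Bpoly_support (ν : Fin t →₀ ℕ) : ∀ μ ∈ (Bpoly K ν).support, μ ≤ ν := by
  intro μ hμ
  have h := MvPolynomial.mem_support_iff.mp hμ
  rw [Bpoly_eq (K := K), MvPolynomial.coeff_C_mul] at h
  refine (q_top (K := K) ν).1 μ (MvPolynomial.mem_support_iff.mpr fun hc => h ?_)
  rw [hc, mul_zero]

lemma Bpoly_coeff_self (ν : Fin t →₀ ℕ) :
    coeff ν (Bpoly K ν) = (∏ i : Fin t, (((ν i).factorial : K)))⁻¹ := by
  rw [Bpoly_eq, MvPolynomial.coeff_C_mul, (q_top (K := K) ν).2, mul_one, ← Finset.prod_inv_distrib]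


lemma degsum (μ : Fin t →₀ ℕ) : (μ.sum fun _ e => e) = ∑ i : Fin t, μ i :=
  Finsupp.sum_fintype _ _ (fun _ => rfl)

lemma eq_of_le_of_sum_eq {μ ν : Fin t →₀ ℕ} (h : μ ≤ ν)
    (hs : ∑ i : Fin t, μ i = ∑ i : Fin t, ν i) : μ = ν := by
  ext i
  exact (Finset.sum_eq_sum_iff_of_le fun j _ => h j).mp hs i (Finset.mem_univ i)

lemma Bpoly_totalDegree (ν : Fin t →₀ ℕ) :
    (Bpoly K ν).totalDegree ≤ ∑ i : Fin t, ν i := by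
  refine Finset.sup_le fun μ hμ => ?_
  rw [degsum]
  exact Finset.sum_le_sum fun i _ => Bpoly_support ν μ hμ i

lemma prod_factorial_ne_zero (ν : Fin t →₀ ℕ) :
    (∏ i : Fin t, (((ν i).factorial : K))) ≠ 0 :=
  Finset.prod_ne_zero_iff.mpr fun i _ => by
    exact_mod_cast Nat.factorial_ne_zero (ν i)

lemma mem_span_B : ∀ (d : ℕ) (f : MvPolynomial (Fin t) K), f.totalDegree ≤ d →
    f ∈ Submodule.span K (Set.range (Bpoly K (t := t))) := by
  intro d
  induction d using Nat.strong_induction_on with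
  | _ d IH =>
  intro f hf
  by_cases hd : f.totalDegree = d
  case neg =>
    cases d with
    | zero => omega
    | succ n => exact IH n (by omega) f (by omega)
  classical
  set T := f.support.filter (fun ν => ∑ i : Fin t, ν i = d) with hT
  set c : (Fin t →₀ ℕ) → K := fun ν => coeff ν f * ∏ i : Fin t, ((ν i).factorial : K) with hc
  set g := f - ∑ ν ∈ T, c ν • Bpoly K ν with hg
  have hfg : f = g + ∑ ν ∈ T, c ν • Bpoly K ν := by rw [hg]; ring
  have hBspan : ∀ ν : Fin t →₀ ℕ,
      Bpoly K ν ∈ Submodule.span K (Set.range (Bpoly K (t := t))) :=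
    fun ν => Submodule.subset_span ⟨ν, rfl⟩
  suffices hgs : g ∈ Submodule.span K (Set.range (Bpoly K (t := t))) by
    rw [hfg]
    exact Submodule.add_mem _ hgs
      (Submodule.sum_mem _ fun ν _ => Submodule.smul_mem _ _ (hBspan ν))
  have hBcoeff : ∀ (μ ν : Fin t →₀ ℕ), ν ∈ T → (∑ i : Fin t, μ i) = d → μ ≠ ν →
      coeff μ (Bpoly K ν) = 0 := by
    intro μ ν hν hμd hne
    by_contra hcne
    have hle : μ ≤ ν := Bpoly_support ν μ (MvPolynomial.mem_support_iff.mpr hcne)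
    have hsν : ∑ i : Fin t, ν i = d := (Finset.mem_filter.mp hν).2
    exact hne (eq_of_le_of_sum_eq hle (by omega))
  have hcoeff : ∀ μ : Fin t →₀ ℕ, (∑ i : Fin t, μ i) = d → coeff μ g = 0 := by
    intro μ hμ
    rw [hg, MvPolynomial.coeff_sub, MvPolynomial.coeff_sum]
    simp only [MvPolynomial.coeff_smul, smul_eq_mul]
    by_cases hmem : μ ∈ T
    · rw [Finset.sum_eq_single_of_mem μ hmem
        (fun ν hν hne => by rw [hBcoeff μ ν hν hμ (Ne.symm hne), mul_zero])]
      rw [Bpoly_coeff_self, hc]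
      rw [mul_assoc, mul_inv_cancel₀ (prod_factorial_ne_zero μ), mul_one, sub_self]
    · have hf0 : coeff μ f = 0 := by
        by_contra hne
        exact hmem (Finset.mem_filter.mpr ⟨MvPolynomial.mem_support_iff.mpr hne, hμ⟩)
      rw [hf0, Finset.sum_eq_zero fun ν hν => by
        rw [hBcoeff μ ν hν hμ (fun h => hmem (h ▸ hν)), mul_zero], sub_zero]
  have htdg : g.totalDegree ≤ d := by
    rw [hg]
    refine le_trans (MvPolynomial.totalDegree_sub _ _) (max_le (by omega) ?_)
    refine le_trans (MvPolynomial.totalDegree_finset_sum _ _) (Finset.sup_le fun ν hν => ?_)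
    refine le_trans (MvPolynomial.totalDegree_smul_le _ _) ?_
    exact le_trans (Bpoly_totalDegree ν) (le_of_eq (Finset.mem_filter.mp hν).2)
  have hsupp : ∀ μ ∈ g.support, (∑ i : Fin t, μ i) < d := by
    intro μ hμ
    have h1 : (∑ i : Fin t, μ i) ≤ d := by
      have := MvPolynomial.le_totalDegree hμ
      rw [degsum] at this
      omega
    have h2 : (∑ i : Fin t, μ i) ≠ d :=
      fun h => MvPolynomial.mem_support_iff.mp hμ (hcoeff μ h)
    omega
  cases d with
  | zero =>
    have : g = 0 := by
      by_contra h0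
      obtain ⟨μ, hμ⟩ := (MvPolynomial.support_nonempty.mpr h0)
      exact absurd (hsupp μ hμ) (by omega)
    rw [this]
    exact Submodule.zero_mem _
  | succ n =>
    refine IH n (by omega) g (Finset.sup_le fun μ hμ => ?_)
    rw [degsum]
    have := hsupp μ hμ
    omega


lemma eval_binomPoly (p : MvPolynomial (Fin t) K) (n : ℕ) (z : Fin t → K) :
    eval z (binomPoly p n) =
      ((n.factorial : K))⁻¹ * ∏ j ∈ Finset.range n, (eval z p - (j : K)) := by
  simp [binomPoly]

lemma eval_B_nat (μ ν : Fin t →₀ ℕ) :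
    eval (fun i => ((μ i : ℕ) : K)) (Bpoly K ν)
      = ((∏ i : Fin t, (μ i).choose (ν i) : ℕ) : K) := by
  rw [Bpoly, map_prod]
  push_cast
  refine Finset.prod_congr rfl fun i _ => ?_
  rw [eval_binomPoly, eval_X, nat_choose_eval]

lemma coeffs_int (f : MvPolynomial (Fin t) K)
    (hf : ∀ z : Fin t → ℤ, ∃ m : ℤ, eval (fun i => (z i : K)) f = m)
    (l : (Fin t →₀ ℕ) →₀ K) (hl : (l.sum fun ν a => a • Bpoly K ν) = f) :
    ∀ ν : Fin t →₀ ℕ, ∃ m : ℤ, l ν = (m : K) := by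
  classical
  set S : Subring K := (Int.castRingHom K).range with hS
  have hmemS : ∀ x : K, (∃ m : ℤ, x = m) ↔ x ∈ S := by
    intro x
    constructor
    · rintro ⟨m, rfl⟩; exact ⟨m, rfl⟩
    · rintro ⟨m, rfl⟩; exact ⟨m, rfl⟩
  suffices h : ∀ (n : ℕ) (μ : Fin t →₀ ℕ), (∑ i : Fin t, μ i) ≤ n → l μ ∈ S by
    intro ν
    rw [hmemS]
    exact h (∑ i : Fin t, ν i) ν le_rfl
  intro n
  induction n using Nat.strong_induction_on with
  | _ n IH =>
  intro μ hμn
  by_cases hμs : μ ∈ l.support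
  case neg =>
    rw [Finsupp.notMem_support_iff.mp hμs]
    exact zero_mem S
  obtain ⟨M, hM⟩ := hf (fun i => (μ i : ℤ))
  have heval : (M : K) = ∑ ν ∈ l.support, l ν *
      ((∏ i : Fin t, (μ i).choose (ν i) : ℕ) : K) := by
    rw [← hM, ← hl, Finsupp.sum, map_sum]
    have hpt : (fun i => (((μ i : ℤ) : K))) = (fun i => ((μ i : ℕ) : K)) := by
      funext i; push_cast; rfl
    rw [hpt]
    refine Finset.sum_congr rfl fun ν _ => ?_
    rw [MvPolynomial.smul_eq_C_mul, map_mul, eval_C, eval_B_nat]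
  rw [← Finset.add_sum_erase _ _ hμs] at heval
  have hEμ : ((∏ i : Fin t, (μ i).choose (μ i) : ℕ) : K) = 1 := by
    simp
  rw [hEμ, mul_one] at heval
  have hlμ : l μ = (M : K) - ∑ ν ∈ l.support.erase μ, l ν *
      ((∏ i : Fin t, (μ i).choose (ν i) : ℕ) : K) := by
    rw [heval]; ring
  rw [hlμ]
  refine sub_mem ⟨M, rfl⟩ (Subring.sum_mem S fun ν hν => ?_)
  by_cases hle : ν ≤ μ
  · have hsum : (∑ i : Fin t, ν i) < ∑ i : Fin t, μ i := by
      have hne : ν ≠ μ := Finset.ne_of_mem_erase hν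
      have hlt : ∃ i, ν i < μ i := by
        by_contra hc
        push_neg at hc
        exact hne (Finsupp.ext fun i => le_antisymm (hle i) (hc i))
      obtain ⟨i, hi⟩ := hlt
      refine Finset.sum_lt_sum (fun j _ => hle j) ⟨i, Finset.mem_univ i, hi⟩
    refine mul_mem (IH (∑ i : Fin t, ν i)
      (by omega) ν le_rfl) ⟨(∏ i : Fin t, (μ i).choose (ν i) : ℕ), by simp [Int.castRingHom]⟩
  · have : ∃ i, μ i < ν i := by
      by_contra hc
      push_neg at hc
      exact hle fun i => hc i
    obtain ⟨i, hi⟩ := this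
    have : (∏ i : Fin t, (μ i).choose (ν i) : ℕ) = 0 :=
      Finset.prod_eq_zero (Finset.mem_univ i) (Nat.choose_eq_zero_of_lt hi)
    rw [this, Nat.cast_zero, mul_zero]
    exact zero_mem S


end

/-- The ℤ-subalgebra of `K[y₁,…,y_t]` generated by all `binom(H − z, n)`, for `H` a
ℤ-linear combination of the variables, `z ∈ ℤ` and `n ∈ ℕ`, coincides with the ring of
integer-valued polynomials. -/
theorem adjoin_binomials_eq_integer_valued_polynomials
    (K : Type*) [Field K] [CharZero K] (t : ℕ) (ht : 1 ≤ t) :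
    (Algebra.adjoin ℤ
        {f : MvPolynomial (Fin t) K | ∃ (a : Fin t → ℤ) (z : ℤ) (n : ℕ),
          f = binomPoly ((∑ i : Fin t, a i • MvPolynomial.X i)
                - MvPolynomial.C (z : K)) n} :
      Set (MvPolynomial (Fin t) K)) =
    {f | ∀ z : Fin t → ℤ, ∃ m : ℤ,
      MvPolynomial.eval (fun i => (z i : K)) f = (m : K)} := by
  classical
  set S := {f : MvPolynomial (Fin t) K | ∃ (a : Fin t → ℤ) (z : ℤ) (n : ℕ),
      f = binomPoly ((∑ i : Fin t, a i • MvPolynomial.X i)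
            - MvPolynomial.C (z : K)) n} with hSdef
  ext f
  constructor
  · intro hf
    induction hf using Algebra.adjoin_induction with
    | mem x hx =>
      obtain ⟨a, z', n, rfl⟩ := hx
      intro z
      refine ⟨Ring.choose (∑ i : Fin t, a i * z i - z') n, ?_⟩
      rw [eval_binomPoly]
      have hw : eval (fun i => ((z i : ℤ) : K))
          ((∑ i : Fin t, a i • MvPolynomial.X i) - MvPolynomial.C (z' : K))
          = (((∑ i : Fin t, a i * z i - z' : ℤ)) : K) := by
        rw [map_sub, map_sum, eval_C]
        simp only [zsmul_eq_mul, map_mul, map_intCast, eval_X]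
        push_cast
        ring
      rw [hw, binom_value]
    | algebraMap r =>
      intro z
      exact ⟨r, by simp⟩
    | add x y hx hy ihx ihy =>
      intro z
      obtain ⟨m1, h1⟩ := ihx z
      obtain ⟨m2, h2⟩ := ihy z
      exact ⟨m1 + m2, by rw [map_add, h1, h2]; push_cast; ring⟩
    | mul x y hx hy ihx ihy =>
      intro z
      obtain ⟨m1, h1⟩ := ihx z
      obtain ⟨m2, h2⟩ := ihy z
      exact ⟨m1 * m2, by rw [map_mul, h1, h2]; push_cast; ring⟩
  · intro hf
    have hspan := mem_span_B f.totalDegree f le_rfl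
    obtain ⟨l, hl⟩ := Finsupp.mem_span_range_iff_exists_finsupp.mp hspan
    have hB : ∀ ν : Fin t →₀ ℕ, Bpoly K ν ∈ Algebra.adjoin ℤ S := by
      intro ν
      refine Subalgebra.prod_mem _ fun i _ => ?_
      refine Algebra.subset_adjoin ⟨(Pi.single i (1 : ℤ) : Fin t → ℤ), 0, ν i, ?_⟩
      congr 1
      have hX : ∑ k : Fin t, (Pi.single i (1 : ℤ) : Fin t → ℤ) k • (X k : MvPolynomial (Fin t) K)
          = X i := by
        rw [Finset.sum_eq_single i]
        · rw [Pi.single_eq_same, one_smul]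
        · intro k _ hk
          rw [Pi.single_eq_of_ne hk, zero_smul]
        · intro h
          exact absurd (Finset.mem_univ i) h
      rw [hX, Int.cast_zero, map_zero, sub_zero]
    rw [← hl]
    rw [Finsupp.sum]
    refine Subalgebra.sum_mem _ fun ν hν => ?_
    obtain ⟨m, hm⟩ := coeffs_int f hf l hl ν
    rw [hm, MvPolynomial.smul_eq_C_mul]
    have : (MvPolynomial.C ((m : ℤ) : K) : MvPolynomial (Fin t) K)
        = algebraMap ℤ (MvPolynomial (Fin t) K) m := by
      simp
    rw [this]
    exact Subalgebra.mul_mem _ (Subalgebra.algebraMap_mem _ m) (hB ν)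
end

section
/- Let A be an associative unital ℚ-algebra and let e, f, h ∈ A satisfy the sl₂-relations h·e − e·h = 2e, h·f − f·h = −2f, e·f − f·e = h. Then for all m, n ∈ ℕ one has e^{(n)} · f^{(m)} = Σ_{k=0}^{min(m,n)} f^{(m−k)} · binom(h − (m+n−2k)·1, k) · e^{(n−k)}. -/
/-- Divided power `a^{(n)} := aⁿ/n!` in a ℚ-algebra. -/
noncomputable def dividedPower {A : Type*} [Ring A] [Algebra ℚ A] (a : A) (n : ℕ) : A :=
  (n.factorial : ℚ)⁻¹ • a ^ n

/-- Binomial coefficient element `binom(a, k) := (1/k!) · ∏_{j=0}^{k-1} (a - j·1)`. -/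
noncomputable def binomElem {A : Type*} [Ring A] [Algebra ℚ A] (a : A) (k : ℕ) : A :=
  (k.factorial : ℚ)⁻¹ • ((List.range k).map (fun (j : ℕ) => a - (j : A))).prod

open Polynomial Finset

section Aux

variable {A : Type*} [Ring A] [Algebra ℚ A]

lemma listprod_eq_aeval (a : A) (k : ℕ) :
    ((List.range k).map (fun (j : ℕ) => a - (j : A))).prod =
      Polynomial.aeval a (descPochhammer ℚ k) := by
  induction k with
  | zero => simp
  | succ k ih =>
      rw [List.range_succ, List.map_append, List.prod_append, descPochhammer_succ_right,
        map_mul, ← ih]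
      simp

lemma aeval_dp_succ' (a : A) (k : ℕ) :
    Polynomial.aeval a (descPochhammer ℚ (k+1)) =
      Polynomial.aeval a (descPochhammer ℚ k) * (a - (k : A)) := by
  rw [descPochhammer_succ_right, map_mul]
  simp

lemma aeval_dp_add_one (a : A) (k : ℕ) :
    Polynomial.aeval (a + 1) (descPochhammer ℚ (k+1)) =
      (a + 1) * Polynomial.aeval a (descPochhammer ℚ k) := by
  induction k with
  | zero => simp [descPochhammer]
  | succ k ih =>
      rw [aeval_dp_succ', ih, aeval_dp_succ', mul_assoc]
      congr 2
      push_cast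
      abel

lemma castlem (R : Type*) [Ring R] (n k : ℕ) :
    ((n.choose (k+1) : ℕ) : R) * ((k : R) + 1) = ((n.choose k : ℕ) : R) * ((n : R) - (k : R)) := by
  rcases le_or_gt (k+1) n with hle | hlt
  · have h := Nat.choose_succ_right_eq n k
    have : ((n - k : ℕ) : R) = (n : R) - (k : R) := by
      exact_mod_cast Nat.cast_sub (by omega)
    rw [← this]
    exact_mod_cast congrArg (Nat.cast (R := R)) h
  · rcases Nat.lt_or_ge k n with h | h
    · omega
    · rcases eq_or_lt_of_le h with rfl | h2
      · simp [Nat.choose_succ_self]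
      · rw [Nat.choose_eq_zero_of_lt (by omega), Nat.choose_eq_zero_of_lt (by omega)]
        simp

lemma core_poly (n k : ℕ) :
    (n.choose (k+1)) • (descPochhammer ℚ (k+1)) +
      (n.choose k) • ((X + (n : ℚ[X]) + 1 - (k : ℚ[X])) * descPochhammer ℚ k) =
    ((n+1).choose (k+1)) • ((X + 1) * descPochhammer ℚ k) := by
  rw [descPochhammer_succ_right, Nat.choose_succ_succ]
  simp only [nsmul_eq_mul, Nat.cast_add]
  linear_combination -(descPochhammer ℚ k) * castlem ℚ[X] n k

lemma core (a : A) (n k : ℕ) :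
    (n.choose (k+1)) • Polynomial.aeval a (descPochhammer ℚ (k+1)) +
      (n.choose k) • ((a + (n : A) + 1 - (k : A)) * Polynomial.aeval a (descPochhammer ℚ k)) =
    ((n+1).choose (k+1)) • Polynomial.aeval (a+1) (descPochhammer ℚ (k+1)) := by
  rw [aeval_dp_add_one]
  have := congrArg (Polynomial.aeval a (R := ℚ)) (core_poly n k)
  simpa [map_add, map_nsmul, map_mul, map_sub, map_natCast] using this

lemma e_mul_aeval (e x : A) (hx : e * x = (x - 2) * e) (k : ℕ) :
    e * Polynomial.aeval x (descPochhammer ℚ k) =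
      Polynomial.aeval (x - 2) (descPochhammer ℚ k) * e := by
  induction k with
  | zero => simp
  | succ k ih =>
      have hck : e * (x - (k:A)) = (x - 2 - (k:A)) * e := by
        have h2 : e * (k : A) = (k : A) * e := (Nat.cast_commute k e).symm.eq
        rw [mul_sub, sub_mul, hx, h2]
      rw [aeval_dp_succ', ← mul_assoc, ih, mul_assoc, hck, aeval_dp_succ', ← mul_assoc,
        mul_assoc]

lemma ef_pow (e f h : A) (hf : h * f - f * h = -(2 * f)) (hef : e * f - f * e = h) :
    ∀ s : ℕ, e * f ^ (s+1) = f ^ (s+1) * e + (s+1) • (f ^ s * (h - (s : A))) := by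
  have hf' : h * f = f * h - 2 * f := by
    rw [sub_eq_iff_eq_add] at hf; rw [hf]; abel
  have hef' : e * f = f * e + h := by
    rw [sub_eq_iff_eq_add] at hef; rw [hef]; abel
  intro s
  induction s with
  | zero => simpa using hef'
  | succ s ih =>
      have hsf : (h - (s:A)) * f = f * (h - (s:A) - 2) := by
        have h2 : (s : A) * f = f * (s : A) := (Nat.cast_commute s f).eq
        have h3 : (2:A) * f = f * 2 := by
          have := (Nat.cast_commute 2 f).eq; push_cast at this; exact this
        rw [sub_mul, hf', h2, mul_sub, mul_sub, h3]
        abel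
      calc e * f ^ (s+2) = (e * f ^ (s+1)) * f := by rw [pow_succ, ← mul_assoc]
        _ = f ^ (s+1) * (e * f) + (s+1) • (f ^ s * ((h - (s:A)) * f)) := by
              rw [ih, add_mul, smul_mul_assoc, mul_assoc, mul_assoc]
        _ = f ^ (s+2) * e + f^(s+1) * (h + (s+1) • (h - (s:A) - 2)) := by
              rw [hef', hsf, mul_add, mul_add, mul_smul_comm, ← mul_assoc, ← pow_succ,
                ← mul_assoc, ← pow_succ]
              abel
        _ = f ^ (s+2) * e + (s+2) • (f ^ (s+1) * (h - ((s+1 : ℕ) : A))) := by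
              rw [← mul_smul_comm]
              congr 1
              simp only [nsmul_eq_mul]
              push_cast
              noncomm_ring

lemma e_shift (e h : A) (he : h * e - e * h = 2 * e) (m n k : ℕ) :
    e * (h - (m:A) - (n:A) + 2*(k:A)) = (h - (m:A) - (n:A) + 2*(k:A) - 2) * e := by
  have he' : e * h = h * e - 2 * e := by
    have := sub_eq_iff_eq_add.mp he
    rw [this]; abel
  have hm : e * (m : A) = (m:A) * e := (Nat.cast_commute m e).symm.eq
  have hn : e * (n : A) = (n:A) * e := (Nat.cast_commute n e).symm.eq
  have hk : e * (2 * (k : A)) = (2 * (k:A)) * e := by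
    have := (Nat.cast_commute (2*k) e).symm.eq
    push_cast at this
    exact this
  simp only [mul_sub, sub_mul, mul_add, add_mul]
  rw [he', hm, hn, hk]
  abel

lemma term_step (e f h : A) (he : h * e - e * h = 2 * e)
    (hf : h * f - f * h = -(2 * f)) (hef : e * f - f * e = h)
    (m n k : ℕ) (hk : k ≤ n) :
    e * (f^(m-k) * Polynomial.aeval (h - (m:A) - (n:A) + 2*(k:A)) (descPochhammer ℚ k) * e^(n-k)) =
      f^(m-k) * Polynomial.aeval (h - (m:A) - (n:A) + 2*(k:A) - 2) (descPochhammer ℚ k) * e^(n+1-k)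
      + (m-k) • (f^(m-k-1) *
          ((h - (m:A) + (k:A) + 1) * Polynomial.aeval (h - (m:A) - (n:A) + 2*(k:A)) (descPochhammer ℚ k))
          * e^(n-k)) := by
  have hP := e_mul_aeval e _ (e_shift e h he m n k) k
  have hpow : e^(n+1-k) = e * e^(n-k) := by
    rw [← pow_succ']
    congr 1
    omega
  rcases le_or_gt m k with hmk | hmk
  · rw [Nat.sub_eq_zero_of_le hmk]
    simp only [pow_zero, one_mul, zero_smul, add_zero, zero_mul]
    rw [hpow, ← mul_assoc, hP, mul_assoc]
  · obtain ⟨s, rfl⟩ : ∃ s, m = s + 1 + k := ⟨m - k - 1, by omega⟩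
    rw [show s + 1 + k - k = s + 1 from by omega, show s + 1 - 1 = s from by omega]
    rw [show (h - ((s+1+k : ℕ):A) + (k:A) + 1) = h - (s:A) from by push_cast; abel]
    rw [hpow]
    have expand := ef_pow e f h hf hef s
    calc e * (f^(s+1) * Polynomial.aeval (h - ((s+1+k:ℕ):A) - (n:A) + 2*(k:A)) (descPochhammer ℚ k) * e^(n-k))
        = (e * f^(s+1)) * (Polynomial.aeval (h - ((s+1+k:ℕ):A) - (n:A) + 2*(k:A)) (descPochhammer ℚ k) * e^(n-k)) := by
          rw [mul_assoc (f^(s+1)), ← mul_assoc e]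
      _ = f^(s+1) * (e * (Polynomial.aeval (h - ((s+1+k:ℕ):A) - (n:A) + 2*(k:A)) (descPochhammer ℚ k) * e^(n-k)))
          + (s+1) • (f^s * ((h - (s:A)) * (Polynomial.aeval (h - ((s+1+k:ℕ):A) - (n:A) + 2*(k:A)) (descPochhammer ℚ k) * e^(n-k)))) := by
          rw [expand, add_mul, smul_mul_assoc, mul_assoc, mul_assoc]
      _ = f^(s+1) * Polynomial.aeval (h - ((s+1+k:ℕ):A) - (n:A) + 2*(k:A) - 2) (descPochhammer ℚ k) * (e * e^(n-k))
          + (s+1) • (f^s * ((h - (s:A)) * Polynomial.aeval (h - ((s+1+k:ℕ):A) - (n:A) + 2*(k:A)) (descPochhammer ℚ k)) * e^(n-k)) := by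
          rw [← mul_assoc e, hP]
          simp only [mul_assoc]

end Aux

section Key
variable {A : Type*} [Ring A] [Algebra ℚ A]

lemma smul_sandwich (c : ℕ) (X mid E : A) : c • (X * mid * E) = X * (c • mid) * E := by
  rw [mul_smul_comm, smul_mul_assoc]

lemma cb_coeff (m n k : ℕ) :
    (k.factorial * m.choose k * n.choose k) * (m - k) =
      ((k+1).factorial * m.choose (k+1)) * n.choose k := by
  rw [Nat.factorial_succ]
  calc k.factorial * m.choose k * n.choose k * (m - k)
      = (m.choose k * (m - k)) * (k.factorial * n.choose k) := by ring
    _ = (m.choose (k+1) * (k+1)) * (k.factorial * n.choose k) := by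
        rw [Nat.choose_succ_right_eq]
    _ = (k + 1) * k.factorial * m.choose (k + 1) * n.choose k := by ring

lemma key (e f h : A) (he : h * e - e * h = 2 * e)
    (hf : h * f - f * h = -(2 * f)) (hef : e * f - f * e = h) (m : ℕ) :
    ∀ n : ℕ, e^n * f^m = ∑ k ∈ Finset.range (n+1),
      (k.factorial * m.choose k * n.choose k) •
        (f^(m-k) * Polynomial.aeval (h - (m:A) - (n:A) + 2*(k:A)) (descPochhammer ℚ k) * e^(n-k)) := by
  intro n
  induction n with
  | zero => simp
  | succ n ih =>
      calc e^(n+1) * f^m = e * (e^n * f^m) := by rw [pow_succ', mul_assoc]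
        _ = ∑ k ∈ Finset.range (n+1), (k.factorial * m.choose k * n.choose k) •
              (e * (f^(m-k) * Polynomial.aeval (h - (m:A) - (n:A) + 2*(k:A)) (descPochhammer ℚ k) * e^(n-k))) := by
            rw [ih, Finset.mul_sum]
            simp only [mul_smul_comm]
        _ = ∑ k ∈ Finset.range (n+1),
              ((k.factorial * m.choose k * n.choose k) •
                (f^(m-k) * Polynomial.aeval (h - (m:A) - (n:A) + 2*(k:A) - 2) (descPochhammer ℚ k) * e^(n+1-k))
              + ((k.factorial * m.choose k * n.choose k) * (m-k)) •
                (f^(m-k-1) * ((h - (m:A) + (k:A) + 1) *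
                    Polynomial.aeval (h - (m:A) - (n:A) + 2*(k:A)) (descPochhammer ℚ k)) * e^(n-k))) := by
            refine Finset.sum_congr rfl (fun k hk => ?_)
            rw [term_step e f h he hf hef m n k (by simp at hk; omega), smul_add, smul_smul]
        _ = (∑ k ∈ Finset.range (n+1), (k.factorial * m.choose k * n.choose k) •
                (f^(m-k) * Polynomial.aeval (h - (m:A) - (n:A) + 2*(k:A) - 2) (descPochhammer ℚ k) * e^(n+1-k)))
            + ∑ k ∈ Finset.range (n+1), ((k.factorial * m.choose k * n.choose k) * (m-k)) •
                (f^(m-k-1) * ((h - (m:A) + (k:A) + 1) *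
                    Polynomial.aeval (h - (m:A) - (n:A) + 2*(k:A)) (descPochhammer ℚ k)) * e^(n-k)) :=
            Finset.sum_add_distrib
        _ = (∑ k ∈ Finset.range (n+2), (k.factorial * m.choose k * n.choose k) •
                (f^(m-k) * Polynomial.aeval (h - (m:A) - (n:A) + 2*(k:A) - 2) (descPochhammer ℚ k) * e^(n+1-k)))
            + ∑ k ∈ Finset.range (n+1), ((k.factorial * m.choose k * n.choose k) * (m-k)) •
                (f^(m-k-1) * ((h - (m:A) + (k:A) + 1) *
                    Polynomial.aeval (h - (m:A) - (n:A) + 2*(k:A)) (descPochhammer ℚ k)) * e^(n-k)) := by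
            congr 1
            rw [Finset.sum_range_succ (fun k => (k.factorial * m.choose k * n.choose k) •
                (f^(m-k) * Polynomial.aeval (h - (m:A) - (n:A) + 2*(k:A) - 2) (descPochhammer ℚ k) * e^(n+1-k))) (n+1),
              Nat.choose_succ_self, Nat.mul_zero, zero_smul, add_zero]
        _ = ((Finset.range (n+1)).sum (fun k => ((k+1).factorial * m.choose (k+1) * n.choose (k+1)) •
                (f^(m-(k+1)) * Polynomial.aeval (h - (m:A) - (n:A) + 2*((k+1:ℕ):A) - 2) (descPochhammer ℚ (k+1)) * e^(n+1-(k+1))))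
              + (Nat.factorial 0 * m.choose 0 * n.choose 0) •
                (f^(m-0) * Polynomial.aeval (h - (m:A) - (n:A) + 2*((0:ℕ):A) - 2) (descPochhammer ℚ 0) * e^(n+1-0)))
            + ∑ k ∈ Finset.range (n+1), ((k.factorial * m.choose k * n.choose k) * (m-k)) •
                (f^(m-k-1) * ((h - (m:A) + (k:A) + 1) *
                    Polynomial.aeval (h - (m:A) - (n:A) + 2*(k:A)) (descPochhammer ℚ k)) * e^(n-k)) := by
            congr 1
            exact Finset.sum_range_succ' _ (n+1)
        _ = (Nat.factorial 0 * m.choose 0 * n.choose 0) •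
                (f^(m-0) * Polynomial.aeval (h - (m:A) - (n:A) + 2*((0:ℕ):A) - 2) (descPochhammer ℚ 0) * e^(n+1-0))
            + ∑ k ∈ Finset.range (n+1),
               (((k+1).factorial * m.choose (k+1) * n.choose (k+1)) •
                (f^(m-(k+1)) * Polynomial.aeval (h - (m:A) - (n:A) + 2*((k+1:ℕ):A) - 2) (descPochhammer ℚ (k+1)) * e^(n+1-(k+1)))
               + ((k.factorial * m.choose k * n.choose k) * (m-k)) •
                (f^(m-k-1) * ((h - (m:A) + (k:A) + 1) *
                    Polynomial.aeval (h - (m:A) - (n:A) + 2*(k:A)) (descPochhammer ℚ k)) * e^(n-k))) := by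
            rw [Finset.sum_add_distrib]
            abel
        _ = (Nat.factorial 0 * m.choose 0 * (n+1).choose 0) •
                (f^(m-0) * Polynomial.aeval (h - (m:A) - ((n+1:ℕ):A) + 2*((0:ℕ):A)) (descPochhammer ℚ 0) * e^(n+1-0))
            + ∑ k ∈ Finset.range (n+1),
               ((k+1).factorial * m.choose (k+1) * (n+1).choose (k+1)) •
                (f^(m-(k+1)) * Polynomial.aeval (h - (m:A) - ((n+1:ℕ):A) + 2*((k+1:ℕ):A)) (descPochhammer ℚ (k+1)) * e^(n+1-(k+1))) := by
            congr 1
            · simp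
            refine Finset.sum_congr rfl (fun k hk => ?_)
            rw [show (h - (m:A) - (n:A) + 2*((k+1:ℕ):A) - 2) = (h - (m:A) - (n:A) + 2*(k:A)) from by
                push_cast; abel_nf; norm_num [two_smul]; rw [mul_add, mul_one]; abel,
              show (h - (m:A) - ((n+1:ℕ):A) + 2*((k+1:ℕ):A)) = (h - (m:A) - (n:A) + 2*(k:A)) + 1 from by
                push_cast; noncomm_ring,
              show m-(k+1) = m-k-1 from by omega,
              show n+1-(k+1) = n-k from by omega,
              show (h - (m:A) + (k:A) + 1) = (h - (m:A) - (n:A) + 2*(k:A)) + (n:A) + 1 - (k:A) from by noncomm_ring,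
              cb_coeff m n k]
            simp only [mul_smul]
            rw [← smul_add, ← smul_add]
            congr 1
            congr 1
            rw [smul_sandwich, smul_sandwich, smul_sandwich, ← add_mul, ← mul_add]
            congr 2
            exact core _ n k
        _ = ∑ k ∈ Finset.range (n+2), (k.factorial * m.choose k * (n+1).choose k) •
              (f^(m-k) * Polynomial.aeval (h - (m:A) - ((n+1:ℕ):A) + 2*(k:A)) (descPochhammer ℚ k) * e^(n+1-k)) := by
            rw [Finset.sum_range_succ' (fun k => (k.factorial * m.choose k * (n+1).choose k) •
              (f^(m-k) * Polynomial.aeval (h - (m:A) - ((n+1:ℕ):A) + 2*(k:A)) (descPochhammer ℚ k) * e^(n+1-k))) (n+1)]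
            rw [add_comm]

end Key

/-- Kostant's commutation formula for an sl₂-triple `(e, f, h)`:
`e^{(n)} f^{(m)} = Σ_{k=0}^{min(m,n)} f^{(m-k)} binom(h - (m+n-2k)·1, k) e^{(n-k)}`. -/
theorem dividedPower_sl2_commutation
    (A : Type*) [Ring A] [Algebra ℚ A] (e f h : A)
    (he : h * e - e * h = 2 * e) (hf : h * f - f * h = -(2 * f))
    (hef : e * f - f * e = h) (m n : ℕ) :
    dividedPower e n * dividedPower f m =
      ∑ k ∈ Finset.range (min m n + 1),
        dividedPower f (m - k) *
          binomElem (h - ((m + n - 2 * k : ℕ) : A)) k *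
          dividedPower e (n - k) := by
  simp only [dividedPower, binomElem]
  calc ((n.factorial : ℚ)⁻¹ • e^n) * ((m.factorial : ℚ)⁻¹ • f^m)
      = ((n.factorial : ℚ)⁻¹ * (m.factorial : ℚ)⁻¹) • (e^n * f^m) := by
        rw [smul_mul_assoc, mul_smul_comm, smul_smul]
    _ = ∑ k ∈ Finset.range (n+1),
          (((n.factorial : ℚ)⁻¹ * (m.factorial : ℚ)⁻¹) * ((k.factorial * m.choose k * n.choose k : ℕ) : ℚ)) •
            (f^(m-k) * Polynomial.aeval (h - (m:A) - (n:A) + 2*(k:A)) (descPochhammer ℚ k) * e^(n-k)) := by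
        rw [key e f h he hf hef m n, Finset.smul_sum]
        simp only [← Nat.cast_smul_eq_nsmul ℚ, smul_smul]
    _ = ∑ k ∈ Finset.range (min m n + 1),
          (((n.factorial : ℚ)⁻¹ * (m.factorial : ℚ)⁻¹) * ((k.factorial * m.choose k * n.choose k : ℕ) : ℚ)) •
            (f^(m-k) * Polynomial.aeval (h - (m:A) - (n:A) + 2*(k:A)) (descPochhammer ℚ k) * e^(n-k)) := by
        refine (Finset.sum_subset ?_ ?_).symm
        · intro x hx
          simp only [Finset.mem_range] at *
          omega
        · intro x hx hnx
          simp only [Finset.mem_range] at *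
          have hxm : m < x := by omega
          rw [Nat.choose_eq_zero_of_lt hxm]
          simp
    _ = ∑ k ∈ Finset.range (min m n + 1),
          ((m - k).factorial : ℚ)⁻¹ • f ^ (m - k) *
            ((k.factorial : ℚ)⁻¹ • ((List.range k).map (fun (j : ℕ) => (h - ((m + n - 2 * k : ℕ) : A)) - (j : A))).prod) *
            ((n - k).factorial : ℚ)⁻¹ • e ^ (n - k) := by
        refine Finset.sum_congr rfl (fun k hk => ?_)
        simp only [Finset.mem_range] at hk
        have hkm : k ≤ m := by omega
        have hkn : k ≤ n := by omega
        rw [listprod_eq_aeval]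
        rw [show (h - ((m + n - 2 * k : ℕ) : A)) = h - (m:A) - (n:A) + 2*(k:A) from by
          rw [Nat.cast_sub (by omega)]
          push_cast
          noncomm_ring]
        simp only [smul_mul_assoc, mul_smul_comm, smul_smul]
        congr 1
        rw [← Nat.choose_mul_factorial_mul_factorial hkm,
          ← Nat.choose_mul_factorial_mul_factorial hkn]
        have f1 : (k.factorial : ℚ) ≠ 0 := Nat.cast_ne_zero.mpr (Nat.factorial_ne_zero k)
        have f2 : ((m-k).factorial : ℚ) ≠ 0 := Nat.cast_ne_zero.mpr (Nat.factorial_ne_zero _)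
        have f3 : ((n-k).factorial : ℚ) ≠ 0 := Nat.cast_ne_zero.mpr (Nat.factorial_ne_zero _)
        have f4 : (m.choose k : ℚ) ≠ 0 := Nat.cast_ne_zero.mpr ((Nat.choose_pos hkm).ne')
        have f5 : (n.choose k : ℚ) ≠ 0 := Nat.cast_ne_zero.mpr ((Nat.choose_pos hkn).ne')
        push_cast
        field_simp
end

section
/- Let A be an associative unital ℚ-algebra, let r ∈ ℕ, let ε₁, ε₂, … be signs (each εₛ ∈ {+1, −1}), and let x ∈ A and y₀, y₁, y₂, … ∈ A satisfy x·y_{s−1} − y_{s−1}·x = εₛ·(r+s)·yₛ for all s ≥ 1. Then for every n ∈ ℕ one has x^{(n)} · y₀ = Σ_{k=0}^{n} (∏_{s=1}^{k} εₛ) · C(r+k, k) · y_k · x^{(n−k)}, where C(r+k, k) is the ordinary (integer) binomial coefficient. -/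
lemma x_mul_dividedPower {A : Type*} [Ring A] [Algebra ℚ A] (a : A) (m : ℕ) :
    a * dividedPower a m = ((m : ℚ) + 1) • dividedPower a (m + 1) := by
  simp only [dividedPower, Nat.factorial_succ, pow_succ', mul_smul_comm, smul_smul]
  congr 1
  have h : ((m.factorial : ℚ)) ≠ 0 := by exact_mod_cast m.factorial_ne_zero
  push_cast
  field_simp

/-- If `x·y_{s−1} − y_{s−1}·x = εₛ·(r+s)·yₛ` for all `s ≥ 1`, with each `εₛ = ±1`, then
`x^{(n)} · y₀ = Σ_{k=0}^{n} (∏_{s=1}^{k} εₛ) · C(r+k, k) · y_k · x^{(n−k)}`. -/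
theorem dividedPower_mul_oddRootVector
    (A : Type*) [Ring A] [Algebra ℚ A] (r : ℕ) (ε : ℕ → ℤ)
    (hε : ∀ s : ℕ, ε s = 1 ∨ ε s = -1) (x : A) (y : ℕ → A)
    (hrel : ∀ s : ℕ, 1 ≤ s →
      x * y (s - 1) - y (s - 1) * x = (ε s * ((r : ℤ) + (s : ℤ))) • y s)
    (n : ℕ) :
    dividedPower x n * y 0 =
      ∑ k ∈ Finset.range (n + 1),
        ((∏ s ∈ Finset.Icc 1 k, ε s) * ((r + k).choose k : ℤ)) •
          (y k * dividedPower x (n - k)) := by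
  induction n with
  | zero => simp [dividedPower]
  | succ n ih =>
    set c : ℕ → ℤ := fun k => (∏ s ∈ Finset.Icc 1 k, ε s) * ((r + k).choose k : ℤ) with hc
    -- commutation relation
    have hx : ∀ k : ℕ, x * y k = y k * x + (ε (k+1) * ((r : ℤ) + (k : ℤ) + 1)) • y (k+1) := by
      intro k
      have h := hrel (k+1) (Nat.le_add_left 1 k)
      simp only [Nat.add_sub_cancel] at h
      have h2 := sub_eq_iff_eq_add.mp h
      rw [h2]
      push_cast
      rw [add_comm]
      ring_nf
    -- per-term expansion after multiplying by x
    have step : ∀ k ∈ Finset.range (n+1),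
        x * ((c k) • (y k * dividedPower x (n - k))) =
          ((c k : ℚ) * ((n + 1 - k : ℕ) : ℚ)) • (y k * dividedPower x (n + 1 - k))
          + ((c k : ℚ) * ((ε (k+1) : ℚ) * ((r : ℚ) + (k : ℚ) + 1)))
              • (y (k+1) * dividedPower x (n - k)) := by
      intro k hk
      have hkn : k ≤ n := Nat.lt_succ_iff.mp (Finset.mem_range.mp hk)
      have hsub : n - k + 1 = n + 1 - k := by omega
      rw [mul_smul_comm, ← mul_assoc, hx k, add_mul, smul_mul_assoc, mul_add, smul_add]
      congr 1
      · rw [mul_assoc, x_mul_dividedPower, hsub, mul_smul_comm,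
          ← Int.cast_smul_eq_zsmul ℚ, smul_smul]
        congr 1
        rw [← hsub]
        push_cast
        ring
      · rw [smul_smul, ← Int.cast_smul_eq_zsmul ℚ]
        congr 1
        push_cast
        ring
    -- the key computation
    have key : ((n : ℚ) + 1) • (dividedPower x (n+1) * y 0)
        = ∑ k ∈ Finset.range (n+2),
            (((n : ℚ) + 1) * (c k : ℚ)) • (y k * dividedPower x (n + 1 - k)) := by
      have h1 : ((n : ℚ) + 1) • (dividedPower x (n+1) * y 0)
          = x * (dividedPower x n * y 0) := by
        rw [← mul_assoc, x_mul_dividedPower, smul_mul_assoc]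
      rw [h1, ih, Finset.mul_sum, Finset.sum_congr rfl step, Finset.sum_add_distrib]
      -- first sum: extend range to n+2 (top term vanishes)
      have hA : ∑ k ∈ Finset.range (n+1),
            ((c k : ℚ) * ((n + 1 - k : ℕ) : ℚ)) • (y k * dividedPower x (n + 1 - k))
          = ∑ k ∈ Finset.range (n+2),
            ((c k : ℚ) * ((n + 1 - k : ℕ) : ℚ)) • (y k * dividedPower x (n + 1 - k)) := by
        rw [Finset.sum_range_succ _ (n+1)]
        simp
      -- second sum: reindex
      set D : ℕ → A := fun k => (if k = 0 then (0 : ℚ) else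
          (c (k-1) : ℚ) * ((ε k : ℚ) * ((r : ℚ) + (k : ℚ))))
          • (y k * dividedPower x (n + 1 - k)) with hD
      have hB : ∑ k ∈ Finset.range (n+1),
            ((c k : ℚ) * ((ε (k+1) : ℚ) * ((r : ℚ) + (k : ℚ) + 1)))
              • (y (k+1) * dividedPower x (n - k))
          = ∑ k ∈ Finset.range (n+2), D k := by
        rw [Finset.sum_range_succ' _ (n+1)]
        simp only [hD]
        simp only [if_true, Nat.succ_ne_zero, if_false, ite_true, ite_false, zero_smul,
          add_zero, Nat.add_sub_cancel, Nat.succ_sub_succ_eq_sub, Nat.sub_zero]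
        refine Finset.sum_congr rfl fun k _ => ?_
        congr 1
        push_cast
        ring
      rw [hA, hB, ← Finset.sum_add_distrib]
      apply Finset.sum_congr rfl
      intro k hk
      have hk2 : k ≤ n + 1 := Nat.lt_succ_iff.mp (Finset.mem_range.mp hk)
      rw [hD]
      rcases k with _ | j
      · simp [mul_comm]
      · simp only [Nat.add_sub_cancel, if_neg (Nat.succ_ne_zero j)]
        rw [← add_smul]
        congr 1
        have hj : j ≤ n := by omega
        -- binomial identity
        have hbin : ((r + j + 1) : ℕ) * (r + j).choose j = (r + j + 1).choose (j + 1) * (j + 1) :=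
          Nat.add_one_mul_choose_eq (r + j) j
        have hcsucc : (c (j+1) : ℚ) = (c j : ℚ) * (ε (j+1) : ℚ) *
            (((r + (j+1)).choose (j+1) : ℚ) / ((r + j).choose j : ℚ)) := by
          simp only [hc]
          rw [Finset.prod_Icc_succ_top (by omega : 1 ≤ j + 1)]
          have hne : ((r + j).choose j : ℚ) ≠ 0 := by
            exact_mod_cast Nat.choose_pos (by omega : j ≤ r + j) |>.ne'
          push_cast
          field_simp
        have hsub : ((n + 1 - (j+1) : ℕ) : ℚ) = (n : ℚ) - (j : ℚ) := by
          rw [Nat.succ_sub_succ, Nat.cast_sub hj]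
        rw [hsub, hcsucc]
        have hne : ((r + j).choose j : ℚ) ≠ 0 := by
          exact_mod_cast Nat.choose_pos (by omega : j ≤ r + j) |>.ne'
        have hbinQ : ((r : ℚ) + j + 1) * ((r + j).choose j : ℚ)
            = ((r + j + 1).choose (j + 1) : ℚ) * ((j : ℚ) + 1) := by
          exact_mod_cast congrArg (Nat.cast : ℕ → ℚ) hbin
        have hre : ((r + (j+1)).choose (j+1) : ℚ) = ((r + j + 1).choose (j+1) : ℚ) := by
          norm_num [add_assoc]
        rw [hre]
        push_cast
        field_simp
        linear_combination ((c j : ℚ) * (ε (j+1) : ℚ)) * hbinQ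
    -- divide by n+1
    have hne : ((n : ℚ) + 1) ≠ 0 := by positivity
    calc dividedPower x (n+1) * y 0
        = ((n : ℚ) + 1)⁻¹ • (((n : ℚ) + 1) • (dividedPower x (n+1) * y 0)) :=
          (inv_smul_smul₀ hne _).symm
      _ = _ := by
          rw [key, Finset.smul_sum]
          apply Finset.sum_congr rfl
          intro k _
          rw [smul_smul, inv_mul_cancel_left₀ hne, Int.cast_smul_eq_zsmul]
end

section
/- Let A be an associative unital ℚ-algebra, let w ∈ A be nilpotent, and let a, b, c, t, t' ∈ A be such that: t, t' and c commute with each other and with each of w, a, b; a and b commute with w; a·b = −c·w; c·a = 0 = c·b; and c² = 0. Then t·w, t'·w and (t + t' − c)·w are nilpotent, and exp(t·w) · (1+a) · exp(t'·w) · (1+b) = exp((t + t' − c)·w) · (1 + a + b). -/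
/-- The exponential `exp(x) = Σ_{k<m} xᵏ/k!` of a nilpotent element `x` (with `xᵐ = 0`),
in a ℚ-algebra: a finite sum. -/
noncomputable def nilpotentExp {A : Type*} [Ring A] [Algebra ℚ A] (x : A) (m : ℕ) : A :=
  ∑ k ∈ Finset.range m, (k.factorial : ℚ)⁻¹ • x ^ k

open Finset

lemma pow_add_eq_zero' {A : Type*} [Ring A] {x y : A} (h : Commute x y)
    {p q : ℕ} (hx : x ^ p = 0) (hy : y ^ q = 0) : (x + y) ^ (p + q) = 0 := by
  rw [h.add_pow]
  apply Finset.sum_eq_zero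
  intro m hm
  rcases le_or_gt p m with hi | hi
  · obtain ⟨d, rfl⟩ := Nat.exists_eq_add_of_le hi
    rw [pow_add, hx, zero_mul, zero_mul, zero_mul]
  · have hj : q ≤ p + q - m := by omega
    obtain ⟨d, hd⟩ := Nat.exists_eq_add_of_le hj
    rw [hd, pow_add, hy, zero_mul, mul_zero, zero_mul]

lemma nilpotentExp_eq_of_le {A : Type*} [Ring A] [Algebra ℚ A] {x : A} {m n : ℕ}
    (hx : x ^ m = 0) (hmn : m ≤ n) : nilpotentExp x n = nilpotentExp x m := by
  unfold nilpotentExp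
  refine (Finset.sum_subset (Finset.range_subset_range.2 hmn) ?_).symm
  intro k _ hk
  rw [Finset.mem_range, not_lt] at hk
  obtain ⟨d, rfl⟩ := Nat.exists_eq_add_of_le hk
  rw [pow_add, hx, zero_mul, smul_zero]

lemma nilpotentExp_mul {A : Type*} [Ring A] [Algebra ℚ A] {x y : A} (h : Commute x y)
    {p q : ℕ} (hx : x ^ p = 0) (hy : y ^ q = 0) :
    nilpotentExp x (p + q) * nilpotentExp y (p + q) = nilpotentExp (x + y) (p + q) := by
  set n := p + q with hn
  have key : ∀ i j : ℕ, n ≤ i + j →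
      ((i.factorial : ℚ)⁻¹ * (j.factorial : ℚ)⁻¹) • (x ^ i * y ^ j) = 0 := by
    intro i j hij
    rcases le_or_gt p i with hi | hi
    · obtain ⟨d, rfl⟩ := Nat.exists_eq_add_of_le hi
      rw [pow_add, hx, zero_mul, zero_mul, smul_zero]
    · have hj : q ≤ j := by omega
      obtain ⟨d, rfl⟩ := Nat.exists_eq_add_of_le hj
      rw [pow_add, hy, zero_mul, mul_zero, smul_zero]
  rw [nilpotentExp, nilpotentExp, nilpotentExp, Finset.sum_mul_sum]
  have hrhs : ∀ k ∈ range n, (k.factorial : ℚ)⁻¹ • (x + y) ^ k =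
      ∑ m ∈ range (k + 1),
        ((m.factorial : ℚ)⁻¹ * ((k - m).factorial : ℚ)⁻¹) • (x ^ m * y ^ (k - m)) := by
    intro k _
    rw [h.add_pow, Finset.smul_sum]
    refine Finset.sum_congr rfl fun m hm => ?_
    rw [Finset.mem_range, Nat.lt_succ_iff] at hm
    have h1 : x ^ m * y ^ (k - m) * (k.choose m : A)
        = (k.choose m : ℚ) • (x ^ m * y ^ (k - m)) := by
      rw [← (Nat.cast_commute (k.choose m) (x ^ m * y ^ (k - m))).eq, ← nsmul_eq_mul,
        ← Nat.cast_smul_eq_nsmul ℚ]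
    rw [h1, smul_smul]
    congr 1
    rw [Nat.cast_choose ℚ hm]
    have h2 : (m.factorial : ℚ) ≠ 0 := Nat.cast_ne_zero.2 m.factorial_ne_zero
    have h3 : ((k - m).factorial : ℚ) ≠ 0 := Nat.cast_ne_zero.2 (k - m).factorial_ne_zero
    have h4 : (k.factorial : ℚ) ≠ 0 := Nat.cast_ne_zero.2 k.factorial_ne_zero
    field_simp
  rw [Finset.sum_congr rfl hrhs]
  simp only [smul_mul_smul_comm]
  rw [← Finset.sum_product']
  rw [← Finset.sum_sigma (range n) (fun k => range (k + 1))
    (fun z => ((z.2.factorial : ℚ)⁻¹ * ((z.1 - z.2).factorial : ℚ)⁻¹) • (x ^ z.2 * y ^ (z.1 - z.2)))]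
  have step1 : ∑ p ∈ range n ×ˢ range n,
      ((p.1.factorial : ℚ)⁻¹ * (p.2.factorial : ℚ)⁻¹) • (x ^ p.1 * y ^ p.2)
      = ∑ p ∈ (range n ×ˢ range n).filter (fun p => p.1 + p.2 < n),
      ((p.1.factorial : ℚ)⁻¹ * (p.2.factorial : ℚ)⁻¹) • (x ^ p.1 * y ^ p.2) := by
    refine (Finset.sum_subset (Finset.filter_subset _ _) ?_).symm
    intro p hmem hp
    simp only [Finset.mem_filter, not_and, not_lt] at hp
    exact key p.1 p.2 (hp hmem)
  rw [step1]
  refine Finset.sum_nbij' (fun p => ⟨p.1 + p.2, p.1⟩) (fun x => (x.2, x.1 - x.2)) ?_ ?_ ?_ ?_ ?_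
  · intro p hp
    simp only [Finset.mem_filter, Finset.mem_product, Finset.mem_range] at hp
    simp only [Finset.mem_sigma, Finset.mem_range]
    omega
  · intro x hxx
    simp only [Finset.mem_sigma, Finset.mem_range] at hxx
    simp only [Finset.mem_filter, Finset.mem_product, Finset.mem_range]
    omega
  · intro p hp
    simp only [Finset.mem_filter, Finset.mem_product, Finset.mem_range] at hp
    simp only [Nat.add_sub_cancel_left]
  · intro x hxx
    simp only [Finset.mem_sigma, Finset.mem_range, Nat.lt_succ_iff] at hxx
    ext <;> simp <;> omega
  · intro p hp
    simp only [Nat.add_sub_cancel_left]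

/-- The multiplication rule
`exp(t·w)·(1+a)·exp(t'·w)·(1+b) = exp((t+t'−c)·w)·(1+a+b)` for one-parameter
supersubgroups attached to an odd root vector with nonzero square. -/
theorem exp_one_add_mul_exp_one_add
    (A : Type*) [Ring A] [Algebra ℚ A] (w a b c t t' : A)
    (hw : IsNilpotent w)
    (htt' : Commute t t') (htc : Commute t c) (ht'c : Commute t' c)
    (htw : Commute t w) (hta : Commute t a) (htb : Commute t b)
    (ht'w : Commute t' w) (ht'a : Commute t' a) (ht'b : Commute t' b)
    (hcw : Commute c w) (hca' : Commute c a) (hcb' : Commute c b)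
    (haw : Commute a w) (hbw : Commute b w)
    (hab : a * b = -(c * w)) (hca : c * a = 0) (hcb : c * b = 0)
    (hc2 : c ^ 2 = 0) :
    IsNilpotent (t * w) ∧ IsNilpotent (t' * w) ∧ IsNilpotent ((t + t' - c) * w) ∧
    ∀ m : ℕ, (t * w) ^ m = 0 → (t' * w) ^ m = 0 → ((t + t' - c) * w) ^ m = 0 →
      nilpotentExp (t * w) m * (1 + a) * nilpotentExp (t' * w) m * (1 + b) =
        nilpotentExp ((t + t' - c) * w) m * (1 + a + b) := by
  refine ⟨htw.isNilpotent_mul_left hw, ht'w.isNilpotent_mul_left hw,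
    ((htw.add_left ht'w).sub_left hcw).isNilpotent_mul_left hw, ?_⟩
  intro m h1m h2m h3m
  set N := m + m + 2 with hN
  rw [← nilpotentExp_eq_of_le (n := N) h1m (by omega),
      ← nilpotentExp_eq_of_le (n := N) h2m (by omega),
      ← nilpotentExp_eq_of_le (n := N) h3m (by omega)]
  -- commutation facts
  have c1 : Commute (t * w) (t' * w) :=
    (htt'.mul_right htw).mul_left (ht'w.symm.mul_right (Commute.refl w))
  have ctw_cw : Commute (t * w) (c * w) :=
    (htc.mul_right htw).mul_left (hcw.symm.mul_right (Commute.refl w))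
  have ct'w_cw : Commute (t' * w) (c * w) :=
    (ht'c.mul_right ht'w).mul_left (hcw.symm.mul_right (Commute.refl w))
  have c2 : Commute (t * w + t' * w) (-(c * w)) := (ctw_cw.add_left ct'w_cw).neg_right
  have cta : Commute (t' * w) a := Commute.mul_left ht'a haw.symm
  -- nilpotency powers
  have hx1 : (t * w) ^ (m + 1) = 0 := by rw [pow_succ, h1m, zero_mul]
  have hy1 : (t' * w) ^ (m + 1) = 0 := by rw [pow_succ, h2m, zero_mul]
  have hsum : (t * w + t' * w) ^ (m + m) = 0 := pow_add_eq_zero' c1 h1m h2m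
  have hcwsq : (-(c * w)) ^ 2 = 0 := by
    rw [neg_sq, hcw.mul_pow, hc2, zero_mul]
  -- exp multiplications
  have k1 := nilpotentExp_mul c1 hx1 hy1
  rw [show m + 1 + (m + 1) = N from by omega] at k1
  have k2 := nilpotentExp_mul c2 hsum hcwsq
  have hsum_eq : t * w + t' * w + -(c * w) = (t + t' - c) * w := by noncomm_ring
  rw [hsum_eq] at k2
  have e2 : nilpotentExp (-(c * w)) N = 1 + -(c * w) := by
    rw [nilpotentExp_eq_of_le hcwsq (by omega)]
    norm_num [nilpotentExp, Finset.sum_range_succ]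
  -- commute (1+a) across the exp
  have ca : Commute (nilpotentExp (t' * w) N) (1 + a) := by
    refine (Commute.one_right _).add_right ?_
    refine Commute.sum_left _ _ _ fun k _ => ?_
    exact ((cta.pow_left k).smul_left _)
  -- the scalar part identity
  have h5 : c * w * a = 0 := by rw [mul_assoc, haw.symm.eq, ← mul_assoc, hca, zero_mul]
  have h6 : c * w * b = 0 := by rw [mul_assoc, hbw.symm.eq, ← mul_assoc, hcb, zero_mul]
  have hfin : (1 + a) * (1 + b) = (1 + -(c * w)) * (1 + a + b) := by
    have l1 : (1 + a) * (1 + b) = 1 + a + b + a * b := by noncomm_ring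
    have l2 : (1 + -(c * w)) * (1 + a + b)
        = 1 + a + b + -(c * w) + -(c * w * a) + -(c * w * b) := by noncomm_ring
    rw [l1, l2, hab, h5, h6, neg_zero, add_zero, add_zero]
  calc nilpotentExp (t * w) N * (1 + a) * nilpotentExp (t' * w) N * (1 + b)
      = nilpotentExp (t * w) N * nilpotentExp (t' * w) N * ((1 + a) * (1 + b)) := by
        rw [mul_assoc (nilpotentExp (t * w) N), ← ca.eq, ← mul_assoc, ← mul_assoc,
          mul_assoc _ (1 + a) (1 + b)]
    _ = nilpotentExp (t * w + t' * w) N * ((1 + -(c * w)) * (1 + a + b)) := by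
        rw [k1, hfin]
    _ = nilpotentExp ((t + t' - c) * w) N * (1 + a + b) := by
        rw [← k2, e2, mul_assoc]
end
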